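/- Suppose S ≥ 4 is a real number satisfying S² ≤ 4 + (1/(K log T)) · ∑_{t=1}^T b_t² with 0 ≤ b_t ≤ S and 0 ≤ b_t ≤ a_t for reals a_t ≥ 0, where K log T ≥ 1. Then S^α ≤ (4/3)·(1/(K log T))·∑_{t=1}^T a_t^α for any α ∈ (1, 2]. -/
import Mathlib


theorem stmt_9 (S : ℝ) (hS : 4 ≤ S) (K T : ℕ) (hKT : 1 ≤ (K : ℝ) * Real.log T)
    (a b : ℕ → ℝ) (ha0 : ∀ t, 0 ≤ a t)
    (hb0 : ∀ t, 0 ≤ b t) (hbS : ∀ t, b t ≤ S) (hba : ∀ t, b t ≤ a t)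
    (hSsq : S ^ 2 ≤ 4 + (1 / ((K : ℝ) * Real.log T)) * ∑ t ∈ Finset.Icc 1 T, b t ^ 2)
    (α : ℝ) (hα1 : 1 < α) (hα2 : α ≤ 2) :
    S ^ α ≤ (4/3) * (1 / ((K : ℝ) * Real.log T)) * ∑ t ∈ Finset.Icc 1 T, a t ^ α := by
  set L : ℝ := (K : ℝ) * Real.log T with hL
  have hL0 : 0 < L := lt_of_lt_of_le one_pos hKT
  have hS0 : (0 : ℝ) < S := lt_of_lt_of_le (by norm_num) hS
  have h2α : 0 ≤ 2 - α := by linarith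
  have hα0 : 0 ≤ α := by linarith
  -- termwise bound
  have hterm : ∀ t, b t ^ 2 ≤ S ^ (2 - α) * a t ^ α := by
    intro t
    rcases eq_or_lt_of_le (hb0 t) with h | h
    · have : b t ^ 2 = 0 := by rw [← h]; ring
      rw [this]
      exact mul_nonneg (Real.rpow_nonneg hS0.le _) (Real.rpow_nonneg (ha0 t) _)
    · have hb2 : b t ^ 2 = b t ^ ((2 - α) + α) := by
        rw [show (2 - α) + α = ((2 : ℕ) : ℝ) by push_cast; ring, Real.rpow_natCast]
      rw [hb2, Real.rpow_add h]
      exact mul_le_mul (Real.rpow_le_rpow h.le (hbS t) h2α)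
        (Real.rpow_le_rpow h.le (hba t) hα0) (Real.rpow_nonneg h.le _)
        (Real.rpow_nonneg hS0.le _)
  have hsum : ∑ t ∈ Finset.Icc 1 T, b t ^ 2 ≤ S ^ (2 - α) * ∑ t ∈ Finset.Icc 1 T, a t ^ α := by
    rw [Finset.mul_sum]
    exact Finset.sum_le_sum fun t _ => hterm t
  have h4 : (4 : ℝ) ≤ S ^ 2 / 4 := by nlinarith
  have hkey : (3 / 4 : ℝ) * S ^ 2 ≤ (1 / L) * (S ^ (2 - α) * ∑ t ∈ Finset.Icc 1 T, a t ^ α) := by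
    have h1 : (1 / L) * ∑ t ∈ Finset.Icc 1 T, b t ^ 2 ≤
        (1 / L) * (S ^ (2 - α) * ∑ t ∈ Finset.Icc 1 T, a t ^ α) :=
      mul_le_mul_of_nonneg_left hsum (by positivity)
    linarith
  -- S^2 = S^α * S^(2-α)
  have hsplit : S ^ 2 = S ^ α * S ^ (2 - α) := by
    rw [← Real.rpow_add hS0, show α + (2 - α) = ((2 : ℕ) : ℝ) by push_cast; ring,
      Real.rpow_natCast]
  have hSp : 0 < S ^ (2 - α) := Real.rpow_pos_of_pos hS0 _
  rw [hsplit] at hkey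
  have hcancel : S ^ α * S ^ (2 - α) ≤
      ((4 / 3) * (1 / L) * ∑ t ∈ Finset.Icc 1 T, a t ^ α) * S ^ (2 - α) := by
    nlinarith [hkey]
  exact le_of_mul_le_mul_right hcancel hSp
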